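/- Let A be a Banach algebra with unit, let I ⊆ ℝ be an open interval, and let u : I → A be n-times continuously differentiable such that u(x) is invertible for every x ∈ I. Then the map x ↦ u(x)^{−1} is n-times differentiable and for every n ∈ ℕ and x ∈ I: (d/dx)^n (u(x)^{−1}) = Σ_{c ∈ C_n} (−1)^{#c} · (n!/c!) · u(x)^{−1} · ∏_{l=1}^{#c} ( u^{(c_l)}(x) · u(x)^{−1} ), where the (ordered) product is taken from l = 1 to #c. -/

import Mathlib

lemma comp_ext_aux {m : ℕ} (c₁ c₂ : Composition m) (h : c₁.blocks = c₂.blocks) : c₁ = c₂ := by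
  cases c₁; cases c₂; simp_all

lemma comp_rec {A : Type*} [Ring A] [Algebra ℝ A] (W : A) (V : ℕ → A) (m : ℕ) (hm : 1 ≤ m) :
    ∑ c : Composition m,
      ((-1 : ℝ) ^ c.length * (m.factorial : ℝ) / ((c.blocks.map Nat.factorial).prod : ℕ)) •
        (W * (c.blocks.map (fun j => V j * W)).prod)
    = -(W * ∑ k ∈ Finset.range m, (m.choose (k+1) : ℝ) •
        (V (k+1) * ∑ c : Composition (m - (k+1)),
          ((-1 : ℝ) ^ c.length * ((m - (k+1)).factorial : ℝ) /
              ((c.blocks.map Nat.factorial).prod : ℕ)) •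
            (W * (c.blocks.map (fun j => V j * W)).prod))) := by
  have hbne : ∀ c : Composition m, c.blocks ≠ [] := by
    intro c h
    have hs := c.blocks_sum
    rw [h] at hs
    simp at hs
    omega
  have hhead : ∀ c : Composition m,
      1 ≤ c.blocks.head! ∧ c.blocks.head! + c.blocks.tail.sum = m := by
    intro c
    have h1 : c.blocks.head! :: c.blocks.tail = c.blocks := List.cons_head!_tail (hbne c)
    constructor
    · exact c.one_le_blocks (by rw [← h1]; exact List.mem_cons_self)
    · have hs := c.blocks_sum
      rw [← h1, List.sum_cons] at hs
      exact hs
  have step1 : -(W * ∑ k ∈ Finset.range m, (m.choose (k+1) : ℝ) •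
        (V (k+1) * ∑ c : Composition (m - (k+1)),
          ((-1 : ℝ) ^ c.length * ((m - (k+1)).factorial : ℝ) /
              ((c.blocks.map Nat.factorial).prod : ℕ)) •
            (W * (c.blocks.map (fun j => V j * W)).prod)))
      = ∑ k ∈ Finset.range m, ∑ c : Composition (m - (k+1)),
          (-((m.choose (k+1) : ℝ) * ((-1 : ℝ) ^ c.length * ((m - (k+1)).factorial : ℝ) /
              ((c.blocks.map Nat.factorial).prod : ℕ)))) •
            (W * ((V (k+1) * W) * (c.blocks.map (fun j => V j * W)).prod)) := by
    rw [Finset.mul_sum, ← Finset.sum_neg_distrib]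
    refine Finset.sum_congr rfl fun k _ => ?_
    rw [Finset.mul_sum, Finset.smul_sum, Finset.mul_sum, ← Finset.sum_neg_distrib]
    refine Finset.sum_congr rfl fun c _ => ?_
    rw [mul_smul_comm, mul_smul_comm, mul_smul_comm, smul_smul, ← neg_smul, ← mul_assoc (V (k+1)) W]
  rw [step1, Finset.sum_sigma']
  refine Finset.sum_bij'
    (fun (c : Composition m) _ =>
      (⟨c.blocks.head! - 1,
        ⟨c.blocks.tail,
          fun hj => c.blocks_pos (List.mem_of_mem_tail hj),
          by have := hhead c; omega⟩⟩ :
        Σ k : ℕ, Composition (m - (k+1))))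
    (fun p hp =>
      (⟨(p.1+1) :: p.2.blocks,
        by
          intro j hj
          rcases List.mem_cons.mp hj with rfl | hj
          · omega
          · exact p.2.blocks_pos hj,
        by
          have hk : p.1 < m := Finset.mem_range.mp (Finset.mem_sigma.mp hp).1
          have hsum := p.2.blocks_sum
          rw [List.sum_cons, hsum]
          omega⟩ : Composition m))
    (fun c _ =>
      Finset.mem_sigma.mpr
        ⟨Finset.mem_range.mpr (show c.blocks.head! - 1 < m by have := hhead c; omega),
         Finset.mem_univ _⟩)
    (fun p hp => Finset.mem_univ _)
    (fun c _ => by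
      apply comp_ext_aux
      show (c.blocks.head! - 1 + 1) :: c.blocks.tail = c.blocks
      have h := hhead c
      have e1 : c.blocks.head! - 1 + 1 = c.blocks.head! := by omega
      rw [e1]
      exact List.cons_head!_tail (hbne c))
    (fun p hp => by
      obtain ⟨k, c⟩ := p
      exact congrArg (Sigma.mk k) (comp_ext_aux _ _ rfl))
    (fun c _ => by
      obtain ⟨h1, h2⟩ := hhead c
      have e1 : c.blocks.head! - 1 + 1 = c.blocks.head! := by omega
      show ((-1 : ℝ) ^ c.length * (m.factorial : ℝ) / ((c.blocks.map Nat.factorial).prod : ℕ)) •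
            (W * (c.blocks.map (fun j => V j * W)).prod)
          = (-((m.choose (c.blocks.head! - 1 + 1) : ℝ) *
              ((-1 : ℝ) ^ (c.blocks.tail.length) *
                  ((m - (c.blocks.head! - 1 + 1)).factorial : ℝ) /
                ((c.blocks.tail.map Nat.factorial).prod : ℕ)))) •
            (W * ((V (c.blocks.head! - 1 + 1) * W) *
              (c.blocks.tail.map (fun j => V j * W)).prod))
      rw [e1]
      have hlen : c.length = c.blocks.tail.length + 1 := by
        show c.blocks.length = _
        conv_lhs => rw [← List.cons_head!_tail (hbne c)]
        simp
      have hmapfac : ((c.blocks.map Nat.factorial).prod : ℕ)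
          = c.blocks.head!.factorial * (c.blocks.tail.map Nat.factorial).prod := by
        conv_lhs => rw [← List.cons_head!_tail (hbne c)]
        simp
      have hprod : (c.blocks.map (fun j => V j * W)).prod
          = (V c.blocks.head! * W) * (c.blocks.tail.map (fun j => V j * W)).prod := by
        conv_lhs => rw [← List.cons_head!_tail (hbne c)]
        simp
      rw [hlen, hmapfac, hprod]
      congr 1
      rw [Nat.cast_mul]
      have hdm : c.blocks.head! ≤ m := by omega
      have hfac : (m.factorial : ℝ)
          = (m.choose c.blocks.head!) * c.blocks.head!.factorial
              * (m - c.blocks.head!).factorial := by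
        exact_mod_cast (Nat.choose_mul_factorial_mul_factorial hdm).symm
      have hq : ((c.blocks.tail.map Nat.factorial).prod : ℝ) ≠ 0 := by
        have hpos : 0 < (c.blocks.tail.map Nat.factorial).prod := by
          apply List.prod_pos
          intro a ha
          rcases List.mem_map.mp ha with ⟨j, _, rfl⟩
          exact Nat.factorial_pos j
        exact_mod_cast hpos.ne'
      have hq2 : (c.blocks.head!.factorial : ℝ) ≠ 0 := by
        exact_mod_cast (Nat.factorial_pos _).ne'
      have habs : ∀ (tl : ℕ) (ch hf mhf q M : ℝ), q ≠ 0 → hf ≠ 0 → M = ch * hf * mhf →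
          (-1 : ℝ)^(tl+1) * M / (hf * q) = -(ch * ((-1 : ℝ)^tl * mhf / q)) := by
        intro tl ch hf mhf q M hqq hhf hM
        subst hM
        field_simp
        ring
      exact habs c.blocks.tail.length _ _ _ _ _ hq hq2 hfac)


lemma my_pascal {A : Type*} [Ring A] [Module ℝ A] (P Q : ℕ → A) (m : ℕ) :
    ∑ k ∈ Finset.range (m+1), (m.choose k : ℝ) • (P (k+1) * Q (m-k) + P k * Q (m-k+1))
      = ∑ k ∈ Finset.range (m+2), ((m+1).choose k : ℝ) • (P k * Q (m+1-k)) := by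
  have e1 : ∀ k ∈ Finset.range (m+1), (m.choose k : ℝ) • (P (k+1) * Q (m-k) + P k * Q (m-k+1))
      = (m.choose k : ℝ) • (P (k+1) * Q (m-k)) + (m.choose k : ℝ) • (P k * Q (m+1-k)) := by
    intro k hk
    have hk' : m - k + 1 = m + 1 - k := by
      have := Finset.mem_range.mp hk; omega
    rw [smul_add, hk']
  rw [Finset.sum_congr rfl e1, Finset.sum_add_distrib]
  have e2 : ∑ k ∈ Finset.range (m+2), ((m+1).choose k : ℝ) • (P k * Q (m+1-k))
      = ∑ k ∈ Finset.range (m+1), (((m.choose k : ℝ) • (P (k+1) * Q (m-k)))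
          + ((m.choose (k+1) : ℝ) • (P (k+1) * Q (m-k)))) + P 0 * Q (m+1) := by
    rw [Finset.sum_range_succ']
    simp only [Nat.succ_sub_succ_eq_sub, Nat.choose_succ_succ, Nat.cast_add, add_smul,
      Nat.choose_zero_right, Nat.cast_one, one_smul, Nat.sub_zero]
  rw [e2, Finset.sum_add_distrib]
  have e3 : ∑ k ∈ Finset.range (m+1), ((m.choose (k+1) : ℝ) • (P (k+1) * Q (m-k))) + P 0 * Q (m+1)
      = ∑ k ∈ Finset.range (m+1), (m.choose k : ℝ) • (P k * Q (m+1-k)) := by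
    have e4 : ∑ k ∈ Finset.range (m+2), (m.choose k : ℝ) • (P k * Q (m+1-k))
        = ∑ k ∈ Finset.range (m+1), ((m.choose (k+1) : ℝ) • (P (k+1) * Q (m-k))) + P 0 * Q (m+1) := by
      rw [Finset.sum_range_succ']
      simp only [Nat.succ_sub_succ_eq_sub, Nat.choose_zero_right, Nat.cast_one, one_smul,
        Nat.sub_zero]
    rw [← e4, Finset.sum_range_succ]
    simp
  rw [add_assoc, e3]

lemma my_leibniz {A : Type*} [NormedRing A] [NormedAlgebra ℝ A]
    {s : Set ℝ} (hs : IsOpen s) {f g : ℝ → A} {n : ℕ}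
    (hf : ContDiffOn ℝ n f s) (hg : ContDiffOn ℝ n g s) :
    ∀ m : ℕ, m ≤ n → ∀ x ∈ s, iteratedDerivWithin m (fun y => f y * g y) s x =
      ∑ k ∈ Finset.range (m + 1), (m.choose k : ℝ) •
        (iteratedDerivWithin k f s x * iteratedDerivWithin (m - k) g s x) := by
  have hus : UniqueDiffOn ℝ s := hs.uniqueDiffOn
  intro m
  induction m with
  | zero => intro _ x hx; simp
  | succ m IH =>
    intro hmn x hx
    have hm : m ≤ n := Nat.le_of_succ_le hmn
    have hud : UniqueDiffWithinAt ℝ s x := hus x hx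
    have Df : ∀ k : ℕ, k ≤ m → ∀ y ∈ s,
        DifferentiableWithinAt ℝ (iteratedDerivWithin k f s) s y := by
      intro k hk y hy
      exact hf.differentiableOn_iteratedDerivWithin
        (by exact_mod_cast Nat.lt_of_lt_of_le (Nat.lt_succ_of_le hk) hmn) hus y hy
    have Dg : ∀ k : ℕ, k ≤ m → ∀ y ∈ s,
        DifferentiableWithinAt ℝ (iteratedDerivWithin k g s) s y := by
      intro k hk y hy
      exact hg.differentiableOn_iteratedDerivWithin
        (by exact_mod_cast Nat.lt_of_lt_of_le (Nat.lt_succ_of_le hk) hmn) hus y hy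
    rw [iteratedDerivWithin_succ,
      derivWithin_congr (fun y hy => IH hm y hy) (IH hm x hx),
      derivWithin_fun_sum (u := Finset.range (m+1))
        (A := fun k y => (m.choose k : ℝ) • (iteratedDerivWithin k f s y * iteratedDerivWithin (m - k) g s y)) (fun k hk =>
        (((Df k (Nat.lt_succ_iff.mp (Finset.mem_range.mp hk)) x hx).mul
          (Dg (m - k) (Nat.sub_le m k) x hx)).const_smul ((m.choose k : ℝ))))]
    have hterm : ∀ k ∈ Finset.range (m+1),
        derivWithin (fun y => (m.choose k : ℝ) •
            (iteratedDerivWithin k f s y * iteratedDerivWithin (m-k) g s y)) s x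
          = (m.choose k : ℝ) • (iteratedDerivWithin (k+1) f s x * iteratedDerivWithin (m-k) g s x
              + iteratedDerivWithin k f s x * iteratedDerivWithin (m-k+1) g s x) := by
      intro k hk
      have hk' : k ≤ m := Nat.lt_succ_iff.mp (Finset.mem_range.mp hk)
      have h1 : HasDerivWithinAt (iteratedDerivWithin k f s)
          (iteratedDerivWithin (k+1) f s x) s x := by
        have := (Df k hk' x hx).hasDerivWithinAt
        rwa [← iteratedDerivWithin_succ] at this
      have h2 : HasDerivWithinAt (iteratedDerivWithin (m-k) g s)
          (iteratedDerivWithin (m-k+1) g s x) s x := by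
        have := (Dg (m-k) (Nat.sub_le m k) x hx).hasDerivWithinAt
        rwa [← iteratedDerivWithin_succ] at this
      exact (((h1.mul h2).const_smul ((m.choose k : ℝ)))).derivWithin hud
    rw [Finset.sum_congr rfl hterm]
    exact my_pascal (fun k => iteratedDerivWithin k f s x)
      (fun k => iteratedDerivWithin k g s x) m

theorem stmt_17 (A : Type*) [NormedRing A] [NormedAlgebra ℝ A] [CompleteSpace A]
    (a b : ℝ) (u : ℝ → A) (n : ℕ) (hn : 1 ≤ n)
    (hu : ContDiffOn ℝ n u (Set.Ioo a b))
    (hinv : ∀ x ∈ Set.Ioo a b, IsUnit (u x)) :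
    ContDiffOn ℝ n (fun x => Ring.inverse (u x)) (Set.Ioo a b) ∧
    ∀ x ∈ Set.Ioo a b,
      iteratedDerivWithin n (fun y => Ring.inverse (u y)) (Set.Ioo a b) x =
        ∑ c : Composition n,
          ((-1 : ℝ) ^ c.length * (n.factorial : ℝ)
              / ((c.blocks.map Nat.factorial).prod : ℕ)) •
            (Ring.inverse (u x) *
              (c.blocks.map
                (fun j => iteratedDerivWithin j u (Set.Ioo a b) x * Ring.inverse (u x))).prod) := by
  have hs : IsOpen (Set.Ioo a b) := isOpen_Ioo
  have hus : UniqueDiffOn ℝ (Set.Ioo a b) := hs.uniqueDiffOn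
  have hw : ContDiffOn ℝ n (fun y => Ring.inverse (u y)) (Set.Ioo a b) := by
    intro x hx
    have h1 : ContDiffAt ℝ n Ring.inverse (u x) := by
      have h2 := contDiffAt_ringInverse ℝ (R := A) (n := n) (hinv x hx).unit
      rwa [IsUnit.unit_spec] at h2
    exact h1.comp_contDiffWithinAt x (hu x hx)
  refine ⟨hw, ?_⟩
  have hrec : ∀ m : ℕ, 1 ≤ m → m ≤ n → ∀ x ∈ Set.Ioo a b,
      iteratedDerivWithin m (fun y => Ring.inverse (u y)) (Set.Ioo a b) x
        = -(Ring.inverse (u x) * ∑ k ∈ Finset.range m, (m.choose (k+1) : ℝ) •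
            (iteratedDerivWithin (k+1) u (Set.Ioo a b) x *
              iteratedDerivWithin (m-(k+1)) (fun y => Ring.inverse (u y)) (Set.Ioo a b) x)) := by
    intro m hm1 hmn x hx
    have h0 : iteratedDerivWithin m (fun y => u y * Ring.inverse (u y)) (Set.Ioo a b) x = 0 := by
      have hEq : Set.EqOn (fun y => u y * Ring.inverse (u y)) (fun _ => (1:A)) (Set.Ioo a b) :=
        fun y hy => Ring.mul_inverse_cancel _ (hinv y hy)
      rw [iteratedDerivWithin_congr hEq hx,
        iteratedDerivWithin_eq_iteratedFDerivWithin,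
        iteratedFDerivWithin_const_of_ne (by omega) _ _]
      rfl
    have hL := my_leibniz hs hu hw m hmn x hx
    have hzero := hL.symm.trans h0
    rw [Finset.sum_range_succ'] at hzero
    simp only [Nat.choose_zero_right, Nat.cast_one, one_smul, Nat.sub_zero,
      iteratedDerivWithin_zero] at hzero
    have h5 := eq_neg_of_add_eq_zero_right hzero
    have h4 : Ring.inverse (u x) * (u x *
        iteratedDerivWithin m (fun y => Ring.inverse (u y)) (Set.Ioo a b) x)
        = iteratedDerivWithin m (fun y => Ring.inverse (u y)) (Set.Ioo a b) x := by
      rw [← mul_assoc, Ring.inverse_mul_cancel _ (hinv x hx), one_mul]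
    rw [← h4, h5, mul_neg]
  have main : ∀ m : ℕ, m ≤ n → ∀ x ∈ Set.Ioo a b,
      iteratedDerivWithin m (fun y => Ring.inverse (u y)) (Set.Ioo a b) x =
        ∑ c : Composition m,
          ((-1 : ℝ) ^ c.length * (m.factorial : ℝ)
              / ((c.blocks.map Nat.factorial).prod : ℕ)) •
            (Ring.inverse (u x) *
              (c.blocks.map
                (fun j => iteratedDerivWithin j u (Set.Ioo a b) x *
                  Ring.inverse (u x))).prod) := by
    intro m
    induction m using Nat.strong_induction_on with
    | _ m IH =>
      intro hmn x hx
      rcases Nat.eq_zero_or_pos m with rfl | hm1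
      · have huniv : (Finset.univ : Finset (Composition 0)) = {Composition.ones 0} := by
          symm
          apply Finset.eq_of_subset_of_card_le
          · intro y hy
            exact Finset.mem_univ y
          · simp [Finset.card_univ, composition_card]
        rw [huniv, Finset.sum_singleton]
        simp [Composition.ones, iteratedDerivWithin_zero, Composition.length]
      · rw [hrec m hm1 hmn x hx]
        have hsum : ∀ k ∈ Finset.range m,
            (m.choose (k+1) : ℝ) • (iteratedDerivWithin (k+1) u (Set.Ioo a b) x *
              iteratedDerivWithin (m-(k+1)) (fun y => Ring.inverse (u y)) (Set.Ioo a b) x)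
            = (m.choose (k+1) : ℝ) • (iteratedDerivWithin (k+1) u (Set.Ioo a b) x *
                ∑ c : Composition (m-(k+1)),
                  ((-1 : ℝ) ^ c.length * ((m-(k+1)).factorial : ℝ)
                      / ((c.blocks.map Nat.factorial).prod : ℕ)) •
                    (Ring.inverse (u x) *
                      (c.blocks.map
                        (fun j => iteratedDerivWithin j u (Set.Ioo a b) x *
                          Ring.inverse (u x))).prod)) := by
          intro k hk
          have hklt := Finset.mem_range.mp hk
          rw [IH (m-(k+1)) (by omega) (by omega) x hx]
        rw [Finset.sum_congr rfl hsum]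
        exact (comp_rec (Ring.inverse (u x))
          (fun j => iteratedDerivWithin j u (Set.Ioo a b) x) m hm1).symm
  exact fun x hx => main n le_rfl x hx
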